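/- In ℚ[y₁,…,y₈], let P be the product, over all sign tuples ε = (ε₁,…,ε₈) ∈ {±1}⁸ having an even number of entries equal to −1 (there are 128 such tuples), of the factors (1 − (ε₁y₁+⋯+ε₈y₈)/2). Then the degree-2 homogeneous component of P equals −16·(y₁²+⋯+y₈²), and the degree-4 homogeneous component of P equals 126·Σ_{i=1}^8 y_i⁴ + 244·Σ_{1≤i<j≤8} y_i² y_j². -/

import Mathlib

open MvPolynomial Finset

namespace ChernE8Aux

/-- multiplying by a homogeneous polynomial shifts homogeneous components -/
lemma comp_mul {σ : Type*} {m : ℕ} (p q : MvPolynomial σ ℚ) (hp : p.IsHomogeneous m) (n : ℕ) :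
    homogeneousComponent (m + n) (p * q) = p * homogeneousComponent n q := by
  conv_lhs => rw [← sum_homogeneousComponent q, Finset.mul_sum, map_sum]
  have key : ∀ i, homogeneousComponent (m + n) (p * homogeneousComponent i q)
      = if m + n = m + i then p * homogeneousComponent i q else 0 :=
    fun i => homogeneousComponent_of_mem (hp.mul (homogeneousComponent_isHomogeneous i q))
  simp only [key, Nat.add_left_cancel_iff]
  rw [Finset.sum_ite_eq (Finset.range _) n (fun i => p * homogeneousComponent i q)]
  split
  · rfl
  · rename_i h
    have h' : q.totalDegree < n := by simpa [Nat.lt_succ_iff] using h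
    rw [homogeneousComponent_eq_zero n q h', mul_zero]

/-- square of a sum -/
lemma sq_sum {M : Type*} [CommRing M] (a : Fin 8 → M) :
    (∑ i, a i) ^ 2 = (∑ i, (a i) ^ 2) + 2 * ∑ i, ∑ j ∈ Ioi i, a i * a j := by
  have h : ∑ i, ∑ j ∈ Ioi i, (a j * a i + a i * a j) = ∑ i, ∑ j ∈ ({i}ᶜ : Finset (Fin 8)), a j * a i :=
    Finset.sum_sum_Ioi_add_eq_sum_sum_off_diag _
  have h2 : ∀ i : Fin 8, ∑ j ∈ ({i}ᶜ : Finset (Fin 8)), a j * a i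
      = (∑ j, a j * a i) - a i * a i := by
    intro i
    rw [← Finset.sum_compl_add_sum {i} (fun j => a j * a i)]
    simp
  simp only [h2] at h
  have h3 : ∑ i, ∑ j ∈ Ioi i, (a j * a i + a i * a j)
      = 2 * ∑ i, ∑ j ∈ Ioi i, a i * a j := by
    rw [Finset.mul_sum]
    refine Finset.sum_congr rfl fun i _ => ?_
    rw [Finset.mul_sum]
    refine Finset.sum_congr rfl fun j _ => by ring
  rw [← h3, h, sq, Finset.sum_mul]
  simp only [Finset.sum_mul, Finset.mul_sum]
  rw [Finset.sum_sub_distrib]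
  have : ∀ i : Fin 8, (∑ j, a j * a i) = ∑ j, a i * a j := fun i =>
    Finset.sum_congr rfl fun j _ => mul_comm _ _
  simp only [this, sq]
  ring

/-- the components of a product of factors `1 - fᵢ` with `fᵢ` homogeneous of degree 2 -/
lemma prod_comps {ι : Type*} (f : ι → MvPolynomial (Fin 8) ℚ)
    (A : Finset ι) (hf : ∀ i ∈ A, (f i).IsHomogeneous 2) :
    homogeneousComponent 0 (∏ i ∈ A, (1 - f i)) = 1 ∧
    homogeneousComponent 2 (∏ i ∈ A, (1 - f i)) = -(∑ i ∈ A, f i) ∧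
    2 * homogeneousComponent 4 (∏ i ∈ A, (1 - f i))
      = (∑ i ∈ A, f i) ^ 2 - ∑ i ∈ A, (f i) ^ 2 := by
  classical
  induction A using Finset.cons_induction with
  | empty =>
    refine ⟨?_, ?_, ?_⟩
    · simp [homogeneousComponent_zero]
    · rw [Finset.prod_empty, homogeneousComponent_eq_zero 2 1 (by simp)]; simp
    · rw [Finset.prod_empty, homogeneousComponent_eq_zero 4 1 (by simp)]; simp
  | cons a A ha ih =>
    have hfa : (f a).IsHomogeneous 2 := hf a (Finset.mem_cons_self a A)
    obtain ⟨ih0, ih2, ih4⟩ := ih (fun i hi => hf i (Finset.mem_cons_of_mem hi))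
    set Q := ∏ i ∈ A, (1 - f i) with hQ
    have hsplit : ∏ i ∈ Finset.cons a A ha, (1 - f i) = Q - f a * Q := by
      rw [Finset.prod_cons, one_sub_mul]
    have e0 : homogeneousComponent 0 (f a * Q) = 0 := by
      rw [homogeneousComponent_zero]
      have : constantCoeff (f a * Q) = constantCoeff (f a) * constantCoeff Q :=
        map_mul _ _ _
      simp only [constantCoeff_eq] at this
      rw [this, hfa.coeff_eq_zero (by simp), zero_mul, map_zero]
    have e2 : homogeneousComponent 2 (f a * Q) = f a * homogeneousComponent 0 Q :=
      comp_mul (f a) Q hfa 0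
    have e4 : homogeneousComponent 4 (f a * Q) = f a * homogeneousComponent 2 Q :=
      comp_mul (f a) Q hfa 2
    refine ⟨?_, ?_, ?_⟩
    · rw [hsplit, map_sub, e0, ih0, sub_zero]
    · rw [hsplit, map_sub, e2, ih0, ih2, Finset.sum_cons]; ring
    · rw [hsplit, map_sub, e4, Finset.sum_cons, Finset.sum_cons, mul_sub]
      linear_combination ih4 - 2 * f a * ih2


/-- the sign attached to index `i` by the subset `s` -/
def v (i : Fin 8) (s : Finset (Fin 8)) : ℚ := if i ∈ s then -1 else 1

/-- the index set: even subsets containing 0 -/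
def T : Finset (Finset (Fin 8)) :=
  univ.filter (fun s => Even s.card ∧ (0 : Fin 8) ∈ s)

/-- the set of ordered pairs i < j -/
def P : Finset ((_ : Fin 8) × Fin 8) := univ.sigma fun i => Ioi i

noncomputable def L (s : Finset (Fin 8)) : MvPolynomial (Fin 8) ℚ :=
  C (2⁻¹ : ℚ) * ∑ i : Fin 8, C (v i s) * X i

noncomputable def Qp : MvPolynomial (Fin 8) ℚ := ∑ i : Fin 8, X i ^ 2

noncomputable def R (s : Finset (Fin 8)) : MvPolynomial (Fin 8) ℚ :=
  ∑ p ∈ P, C (v p.1 s * v p.2 s) * (X p.1 * X p.2)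

noncomputable def U : MvPolynomial (Fin 8) ℚ := ∑ p ∈ P, X p.1 ^ 2 * X p.2 ^ 2

lemma v_mul_self (i : Fin 8) (s : Finset (Fin 8)) : v i s * v i s = 1 := by
  unfold v; split <;> norm_num

lemma v_mul_v (i j : Fin 8) (s : Finset (Fin 8)) :
    v i s * v j s = if ((i ∈ s) ↔ (j ∈ s)) then 1 else -1 := by
  unfold v; by_cases h1 : i ∈ s <;> by_cases h2 : j ∈ s <;> simp [h1, h2]

lemma v4 (i j k l : Fin 8) (s : Finset (Fin 8)) :
    (v i s * v j s) * (v k s * v l s)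
      = if (((i ∈ s) ↔ (j ∈ s)) ↔ ((k ∈ s) ↔ (l ∈ s))) then 1 else -1 := by
  rw [v_mul_v, v_mul_v]
  by_cases h1 : ((i ∈ s) ↔ (j ∈ s)) <;> by_cases h2 : ((k ∈ s) ↔ (l ∈ s)) <;>
    simp [h1, h2]

lemma cardT : T.card = 64 := by decide

set_option maxHeartbeats 1000000 in
lemma card2 : ∀ i j : Fin 8, i ≠ j →
    (T.filter fun s => ((i ∈ s) ↔ (j ∈ s))).card = 32 := by decide

set_option maxHeartbeats 8000000 in
lemma card4 : ∀ i j k l : Fin 8, i < j → k < l → ¬(i = k ∧ j = l) →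
    (T.filter fun s => (((i ∈ s) ↔ (j ∈ s)) ↔ ((k ∈ s) ↔ (l ∈ s)))).card = 32 := by decide

lemma sum_pm (p : Finset (Fin 8) → Prop) [DecidablePred p] :
    ∑ s ∈ T, (if p s then (1 : ℚ) else -1)
      = 2 * ((T.filter p).card : ℚ) - (T.card : ℚ) := by
  rw [Finset.sum_ite, Finset.sum_const, Finset.sum_const]
  have h := Finset.card_filter_add_card_filter_not (s := T) (p := p)
  have h2 : ((T.filter fun s => ¬ p s).card : ℚ) = (T.card : ℚ) - (T.filter p).card := by
    have := congrArg (fun n : ℕ => (n : ℚ)) h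
    push_cast at this
    linarith
  simp only [nsmul_eq_mul, smul_eq_mul]
  rw [h2]
  ring

lemma sum_vv {i j : Fin 8} (h : i ≠ j) : ∑ s ∈ T, v i s * v j s = 0 := by
  simp only [v_mul_v]
  rw [sum_pm, card2 i j h, cardT]
  norm_num

lemma sum_v4 {i j k l : Fin 8} (hij : i < j) (hkl : k < l) (hne : ¬(i = k ∧ j = l)) :
    ∑ s ∈ T, (v i s * v j s) * (v k s * v l s) = 0 := by
  simp only [v4]
  rw [sum_pm, card4 i j k l hij hkl hne, cardT]
  norm_num

lemma mem_P_lt {p : (_ : Fin 8) × Fin 8} (hp : p ∈ P) : p.1 < p.2 := by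
  simp only [P, Finset.mem_sigma, Finset.mem_Ioi] at hp
  exact hp.2

/-- expansion of `(L s)^2` -/
lemma Lsq (s : Finset (Fin 8)) : (L s) ^ 2 = C (4⁻¹ : ℚ) * (Qp + 2 * R s) := by
  unfold L
  rw [mul_pow, sq_sum (fun i => C (v i s) * X i)]
  have hC : (C (2⁻¹ : ℚ) : MvPolynomial (Fin 8) ℚ) ^ 2 = C (4⁻¹ : ℚ) := by
    rw [← map_pow]; norm_num
  rw [hC]
  refine congrArg (fun x => C (4⁻¹ : ℚ) * x) ?_
  refine congrArg₂ (· + ·) ?_ ?_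
  · exact Finset.sum_congr rfl fun i _ => by
      rw [mul_pow, ← map_pow, sq, v_mul_self, map_one, one_mul]
  · refine congrArg (fun x => 2 * x) ?_
    rw [R, P, Finset.sum_sigma']
    exact Finset.sum_congr rfl fun p _ => by rw [mul_mul_mul_comm, ← C_mul]

lemma sumR : ∑ s ∈ T, R s = 0 := by
  unfold R
  rw [Finset.sum_comm]
  refine Finset.sum_eq_zero fun p hp => ?_
  rw [← Finset.sum_mul, ← map_sum, sum_vv (mem_P_lt hp).ne, map_zero, zero_mul]

lemma sumRsq : ∑ s ∈ T, (R s) ^ 2 = C (64 : ℚ) * U := by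
  have expand : ∀ s, (R s) ^ 2 = ∑ p ∈ P, ∑ q ∈ P,
      C ((v p.1 s * v p.2 s) * (v q.1 s * v q.2 s)) * ((X p.1 * X p.2) * (X q.1 * X q.2)) := by
    intro s
    rw [sq, R, Finset.sum_mul_sum]
    exact Finset.sum_congr rfl fun p _ => Finset.sum_congr rfl fun q _ => by
      rw [mul_mul_mul_comm, ← C_mul]
  simp only [expand]
  rw [Finset.sum_comm]
  have inner : ∀ p ∈ P, (∑ s ∈ T, ∑ q ∈ P,
      C ((v p.1 s * v p.2 s) * (v q.1 s * v q.2 s)) * ((X p.1 * X p.2) * (X q.1 * X q.2)))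
      = C (64 : ℚ) * (X p.1 ^ 2 * X p.2 ^ 2) := by
    intro p hp
    rw [Finset.sum_comm]
    rw [Finset.sum_eq_single_of_mem p hp]
    · rw [← Finset.sum_mul, ← map_sum]
      have : ∑ s ∈ T, (v p.1 s * v p.2 s) * (v p.1 s * v p.2 s) = 64 := by
        have : ∀ s ∈ T, (v p.1 s * v p.2 s) * (v p.1 s * v p.2 s) = 1 := by
          intro s _
          have h1 := v_mul_self p.1 s
          have h2 := v_mul_self p.2 s
          nlinarith [h1, h2]
        rw [Finset.sum_congr rfl this, Finset.sum_const, cardT]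
        norm_num
      rw [this]
      ring
    · intro q hq hqp
      rw [← Finset.sum_mul, ← map_sum]
      have hne : ¬(p.1 = q.1 ∧ p.2 = q.2) := by
        rintro ⟨h1, h2⟩
        exact hqp (Sigma.ext h1.symm (heq_of_eq h2.symm))
      rw [show ∑ s ∈ T, (v p.1 s * v p.2 s) * (v q.1 s * v q.2 s) = 0 from
          sum_v4 (mem_P_lt hp) (mem_P_lt hq) hne, map_zero, zero_mul]
  rw [Finset.sum_congr rfl inner, ← Finset.mul_sum]
  rfl


lemma sumLsq : ∑ s ∈ T, (L s) ^ 2 = C (16 : ℚ) * Qp := by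
  simp only [Lsq]
  rw [← Finset.mul_sum, Finset.sum_add_distrib, Finset.sum_const, cardT,
    ← Finset.mul_sum, sumR, mul_zero, add_zero, nsmul_eq_mul,
    ← map_natCast (C : ℚ →+* MvPolynomial (Fin 8) ℚ) 64, ← mul_assoc, ← C_mul]
  norm_num

lemma sumL4 : ∑ s ∈ T, ((L s) ^ 2) ^ 2 = C (4 : ℚ) * Qp ^ 2 + C (16 : ℚ) * U := by
  have h16 : (C (4⁻¹ : ℚ) : MvPolynomial (Fin 8) ℚ) ^ 2 = C (16⁻¹ : ℚ) := by
    rw [← map_pow]; norm_num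
  have step1 : ∀ s : Finset (Fin 8), ((L s) ^ 2) ^ 2
      = C (16⁻¹ : ℚ) * (Qp ^ 2 + (4 * Qp) * R s + 4 * (R s) ^ 2) := by
    intro s
    rw [Lsq, mul_pow, h16]
    ring
  simp only [step1]
  rw [← Finset.mul_sum, Finset.sum_add_distrib, Finset.sum_add_distrib,
    Finset.sum_const, cardT, ← Finset.mul_sum, sumR, mul_zero,
    ← Finset.mul_sum, sumRsq, nsmul_eq_mul,
    ← map_natCast (C : ℚ →+* MvPolynomial (Fin 8) ℚ) 64]
  rw [show (4 : MvPolynomial (Fin 8) ℚ) = C (4 : ℚ) from (map_ofNat _ 4).symm]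
  rw [add_zero]
  rw [show (C (16⁻¹:ℚ) : MvPolynomial (Fin 8) ℚ) * (C ((64:ℕ):ℚ) * Qp ^ 2 + C (4:ℚ) * (C (64:ℚ) * U))
      = C (16⁻¹ * (64:ℕ) : ℚ) * Qp ^ 2 + C (16⁻¹ * (4 * 64) : ℚ) * U from by
    rw [map_mul, map_mul, map_mul]; push_cast; ring]
  norm_num

lemma L_hom (s : Finset (Fin 8)) : (L s).IsHomogeneous 1 :=
  (MvPolynomial.IsHomogeneous.sum univ _ 1 fun i _ => isHomogeneous_C_mul_X _ _).C_mul _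

lemma Lsq_hom (s : Finset (Fin 8)) : ((L s) ^ 2).IsHomogeneous 2 := by
  simpa using (L_hom s).pow 2

lemma Lcompl (s : Finset (Fin 8)) : L sᶜ = - L s := by
  unfold L
  rw [← mul_neg, ← Finset.sum_neg_distrib]
  congr 1
  refine Finset.sum_congr rfl fun i _ => ?_
  have hv : v i sᶜ = - v i s := by
    unfold v; by_cases h : i ∈ s <;> simp [h]
  rw [hv, map_neg, neg_mul]

lemma prod_pair :
    ∏ s ∈ univ.filter (fun s : Finset (Fin 8) => Even s.card), (1 - L s)
      = ∏ s ∈ T, (1 - (L s) ^ 2) := by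
  rw [← Finset.prod_filter_mul_prod_filter_not
    (univ.filter fun s : Finset (Fin 8) => Even s.card) (fun s => (0 : Fin 8) ∈ s),
    Finset.filter_filter, Finset.filter_filter]
  have h2 : ∏ s ∈ univ.filter (fun s : Finset (Fin 8) => Even s.card ∧ ¬(0 : Fin 8) ∈ s),
      (1 - L s) = ∏ t ∈ T, (1 + L t) := by
    refine Finset.prod_nbij' (fun s => sᶜ) (fun t => tᶜ) ?_ ?_ ?_ ?_ ?_
    · intro s hs
      simp only [Finset.mem_filter, Finset.mem_univ, true_and] at hs ⊢
      refine Finset.mem_filter.mpr ⟨Finset.mem_univ _, ?_, ?_⟩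
      · rw [Finset.card_compl, Fintype.card_fin]
        rw [Nat.even_sub (by simpa using Finset.card_le_univ s)]
        simp only [iff_true_intro hs.1]
        decide
      · simpa using hs.2
    · intro t ht
      simp only [T, Finset.mem_filter, Finset.mem_univ, true_and] at ht
      refine Finset.mem_filter.mpr ⟨Finset.mem_univ _, ?_, ?_⟩
      · rw [Finset.card_compl, Fintype.card_fin]
        rw [Nat.even_sub (by simpa using Finset.card_le_univ t)]
        simp only [iff_true_intro ht.1]
        decide
      · simpa using ht.2
    · intro s _; exact compl_compl s
    · intro t _; exact compl_compl t
    · intro s _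
      rw [Lcompl]
      ring
  rw [show univ.filter (fun s : Finset (Fin 8) => Even s.card ∧ (0 : Fin 8) ∈ s) = T from rfl,
    h2, ← Finset.prod_mul_distrib]
  exact Finset.prod_congr rfl fun t _ => by ring

lemma hU : U = ∑ i : Fin 8, ∑ j ∈ Finset.Ioi i, X i ^ 2 * X j ^ 2 := by
  rw [U, P, Finset.sum_sigma']

lemma hQpsq : Qp ^ 2 = (∑ i : Fin 8, X i ^ 4) + 2 * U := by
  unfold Qp
  rw [sq_sum (fun i => X i ^ 2), hU]
  refine congrArg₂ (· + ·) ?_ rfl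
  exact Finset.sum_congr rfl fun i _ => by ring

end ChernE8Aux

open ChernE8Aux in
theorem chern_class_E8_8_isotropy :
    let P : MvPolynomial (Fin 8) ℚ :=
      ∏ s ∈ Finset.univ.filter (fun s : Finset (Fin 8) => Even s.card),
        (1 - C (2⁻¹ : ℚ) * ∑ i : Fin 8, C (if i ∈ s then (-1 : ℚ) else 1) * X i)
    homogeneousComponent 2 P = C (-16 : ℚ) * ∑ i : Fin 8, X i ^ 2
    ∧ homogeneousComponent 4 P
      = C (126 : ℚ) * (∑ i : Fin 8, X i ^ 4)
        + C (244 : ℚ) * ∑ i : Fin 8, ∑ j ∈ Finset.Ioi i, X i ^ 2 * X j ^ 2 := by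
  intro Pol
  have hPol : Pol = ∏ s ∈ T, (1 - (L s) ^ 2) := by
    rw [show Pol = ∏ s ∈ Finset.univ.filter (fun s : Finset (Fin 8) => Even s.card),
      (1 - L s) from rfl, prod_pair]
  obtain ⟨h0, h2, h4⟩ := prod_comps (fun s => (L s) ^ 2) T (fun s _ => Lsq_hom s)
  constructor
  · rw [hPol, h2, sumLsq, show (C (-16 : ℚ) : MvPolynomial (Fin 8) ℚ) = - C (16:ℚ) from
      map_neg C (16:ℚ), neg_mul]
    rfl
  · rw [sumLsq, sumL4] at h4
    have h21 : (C (2⁻¹ : ℚ) : MvPolynomial (Fin 8) ℚ) * 2 = 1 := by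
      rw [show (2 : MvPolynomial (Fin 8) ℚ) = C (2 : ℚ) from (map_ofNat _ 2).symm, ← C_mul]
      norm_num
    have key : 2 * homogeneousComponent 4 Pol
        = 2 * (C (126 : ℚ) * (∑ i : Fin 8, X i ^ 4)
          + C (244 : ℚ) * ∑ i : Fin 8, ∑ j ∈ Finset.Ioi i, X i ^ 2 * X j ^ 2) := by
      rw [hPol, h4, hQpsq, ← hU]
      rw [show ((C (16:ℚ) : MvPolynomial (Fin 8) ℚ) * Qp) ^ 2 = C (256:ℚ) * Qp ^2 from by
        rw [mul_pow, ← map_pow]; norm_num, hQpsq]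
      simp only [map_ofNat]
      ring
    calc homogeneousComponent 4 Pol
        = C (2⁻¹ : ℚ) * (2 * homogeneousComponent 4 Pol) := by
          rw [← mul_assoc, h21, one_mul]
      _ = _ := by rw [key, ← mul_assoc, h21, one_mul]
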